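/- Let l, k ∈ ℝ with l < −1/2 and k + l < −3/4. Then there exists a constant C > 0, depending only on l and k, such that for every continuously differentiable u : (0,∞) → ℂ with ∫₀^∞ |u(x̂)|²·x̂^{−1} dx̂ < ∞, one has ∫₀^∞ |u(x̂)|²·x̂^{−1} dx̂ ≤ C·∫₀^∞ |(𝒩u)(x̂)|²·x̂^{−1} dx̂ (the right-hand side being allowed to equal +∞). -/

import Mathlib

open MeasureTheory

/-- The model operator
`(𝒩u)(x̂) = x̂·u'(x̂) + (x̂/(1+x̂))·(k + 1/4)·u(x̂) + (l + 1/2)·u(x̂)`. -/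
noncomputable def modelN (l k : ℝ) (u : ℝ → ℂ) : ℝ → ℂ := fun x =>
  (x : ℂ) * deriv u x + ((x / (1 + x) : ℝ) : ℂ) * ((k : ℂ) + 1 / 4) * u x
    + ((l : ℂ) + 1 / 2) * u x

open Set

lemma hasDerivAt_norm_sq_comp {u : ℝ → ℂ} {x : ℝ} (hu : DifferentiableAt ℝ u x) :
    HasDerivAt (fun y => ‖u y‖ ^ 2)
      (2 * ((u x).re * (deriv u x).re + (u x).im * (deriv u x).im)) x := by
  have hu' : HasDerivAt u (deriv u x) x := hu.hasDerivAt
  have hre : HasDerivAt (fun y => (u y).re) (deriv u x).re x :=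
    Complex.reCLM.hasFDerivAt.comp_hasDerivAt x hu'
  have him : HasDerivAt (fun y => (u y).im) (deriv u x).im x :=
    Complex.imCLM.hasFDerivAt.comp_hasDerivAt x hu'
  have h : HasDerivAt (fun y => (u y).re ^ 2 + (u y).im ^ 2)
      (2 * ((u x).re * (deriv u x).re + (u x).im * (deriv u x).im)) x := by
    have h2 := (hre.fun_pow 2).fun_add (him.fun_pow 2)
    refine h2.congr_deriv ?_
    push_cast
    ring
  have heq : (fun y => ‖u y‖ ^ 2) = fun y => (u y).re ^ 2 + (u y).im ^ 2 := by
    funext y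
    rw [Complex.sq_norm, Complex.normSq_apply]
    ring
  rw [heq]
  exact h

lemma pointwise_ineq (l k δ : ℝ) (hδ : 0 < δ)
    (hcoef : ∀ x : ℝ, 0 < x → x / (1 + x) * (k + 1 / 4) + (l + 1 / 2) ≤ -δ)
    {u : ℝ → ℂ} {x : ℝ} (hx : 0 < x) :
    δ * (‖u x‖ ^ 2 / x) - 2 * ((u x).re * (deriv u x).re + (u x).im * (deriv u x).im)
      ≤ (1 / δ) * (‖modelN l k u x‖ ^ 2 / x) := by
  set z := u x with hz
  set w := deriv u x with hw
  set a : ℝ := x / (1 + x) * (k + 1 / 4) + (l + 1 / 2) with ha_def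
  have ha : a ≤ -δ := hcoef x hx
  have hN : modelN l k u x = (x : ℂ) * w + (a : ℂ) * z := by
    simp only [modelN, ha_def]
    push_cast
    ring
  have hNre : (modelN l k u x).re = x * w.re + a * z.re := by
    rw [hN]; simp [Complex.add_re, Complex.mul_re]
  have hNim : (modelN l k u x).im = x * w.im + a * z.im := by
    rw [hN]; simp [Complex.add_im, Complex.mul_im]
  have hz2 : ‖z‖ ^ 2 = z.re ^ 2 + z.im ^ 2 := by
    rw [Complex.sq_norm, Complex.normSq_apply]; ring
  have hN2 : ‖modelN l k u x‖ ^ 2 = (x * w.re + a * z.re) ^ 2 + (x * w.im + a * z.im) ^ 2 := by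
    rw [Complex.sq_norm, Complex.normSq_apply, hNre, hNim]; ring
  have key : δ ^ 2 * (z.re ^ 2 + z.im ^ 2) - δ * x * (2 * (z.re * w.re + z.im * w.im))
      ≤ (x * w.re + a * z.re) ^ 2 + (x * w.im + a * z.im) ^ 2 := by
    nlinarith [sq_nonneg (x * w.re + a * z.re + δ * z.re),
      sq_nonneg (x * w.im + a * z.im + δ * z.im),
      mul_nonneg (mul_nonneg hδ.le (by nlinarith : (0:ℝ) ≤ z.re ^ 2 + z.im ^ 2)) (by linarith : (0:ℝ) ≤ -a - δ)]
  have h1 : δ * (‖z‖ ^ 2 / x) - 2 * (z.re * w.re + z.im * w.im)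
      = (δ ^ 2 * (z.re ^ 2 + z.im ^ 2) - δ * x * (2 * (z.re * w.re + z.im * w.im))) / (δ * x) := by
    rw [hz2]; field_simp
  have h2 : (1 / δ) * (‖modelN l k u x‖ ^ 2 / x)
      = ((x * w.re + a * z.re) ^ 2 + (x * w.im + a * z.im) ^ 2) / (δ * x) := by
    rw [hN2]; field_simp
  rw [h1, h2]
  exact div_le_div_of_nonneg_right key (by positivity)

lemma modelN_contOn {l k : ℝ} {u : ℝ → ℂ}
    (hu : ContinuousOn u (Set.Ioi 0)) (hd : ContinuousOn (deriv u) (Set.Ioi 0)) :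
    ContinuousOn (modelN l k u) (Set.Ioi 0) := by
  have h1 : ContinuousOn (fun x : ℝ => (x : ℂ)) (Set.Ioi 0) :=
    Complex.continuous_ofReal.continuousOn
  have hq : ContinuousOn (fun x : ℝ => x / (1 + x)) (Set.Ioi 0) := by
    apply ContinuousOn.div continuousOn_id (continuousOn_const.add continuousOn_id)
    intro x hx
    simp only [Set.mem_Ioi] at hx
    simp only [Pi.add_apply, id]
    positivity
  have h2 : ContinuousOn (fun x : ℝ => ((x / (1 + x) : ℝ) : ℂ)) (Set.Ioi 0) :=
    Complex.continuous_ofReal.comp_continuousOn hq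
  exact ((h1.mul hd).add ((h2.mul continuousOn_const).mul hu)).add (continuousOn_const.mul hu)

/-- Scale-invariant weighted L² estimate for the model operator:
for `l < −1/2` and `k + l < −3/4` there is `C = C(l,k) > 0` with
`∫₀^∞ |u|²/x̂ ≤ C·∫₀^∞ |𝒩u|²/x̂` for all C¹ functions `u` with finite left-hand side. -/
theorem stmt9 (l k : ℝ) (hl : l < -(1 / 2)) (hkl : k + l < -(3 / 4)) :
    ∃ C : ℝ, 0 < C ∧ ∀ u : ℝ → ℂ,
      (∀ x : ℝ, 0 < x → DifferentiableAt ℝ u x) →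
      ContinuousOn (deriv u) (Set.Ioi 0) →
      (∫⁻ x in Set.Ioi (0 : ℝ), ENNReal.ofReal (‖u x‖ ^ 2 / x)) < ⊤ →
      (∫⁻ x in Set.Ioi (0 : ℝ), ENNReal.ofReal (‖u x‖ ^ 2 / x))
        ≤ ENNReal.ofReal C
          * ∫⁻ x in Set.Ioi (0 : ℝ), ENNReal.ofReal (‖modelN l k u x‖ ^ 2 / x) := by
  have hδ1 : (0:ℝ) < -(l + 1 / 2) := by linarith
  have hδ2 : (0:ℝ) < -(k + l + 3 / 4) := by linarith
  set δ : ℝ := min (-(l + 1 / 2)) (-(k + l + 3 / 4)) with hδdef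
  have hδ : 0 < δ := lt_min hδ1 hδ2
  have hcoef : ∀ x : ℝ, 0 < x → x / (1 + x) * (k + 1 / 4) + (l + 1 / 2) ≤ -δ := by
    intro x hx
    have h1 : (0:ℝ) < 1 + x := by linarith
    have ht0 : 0 < x / (1 + x) := div_pos hx h1
    have ht1 : x / (1 + x) < 1 := (div_lt_one h1).mpr (by linarith)
    have e1 : l + 1 / 2 ≤ -δ := by
      have := min_le_left (-(l + 1 / 2)) (-(k + l + 3 / 4)); rw [← hδdef] at this; linarith
    have e2 : k + l + 3 / 4 ≤ -δ := by
      have := min_le_right (-(l + 1 / 2)) (-(k + l + 3 / 4)); rw [← hδdef] at this; linarith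
    nlinarith [mul_le_mul_of_nonneg_left e2 ht0.le,
      mul_le_mul_of_nonneg_left e1 (by linarith : (0:ℝ) ≤ 1 - x / (1 + x))]
  refine ⟨1 / δ ^ 2, by positivity, ?_⟩
  intro u hdiff hdcont hfin
  classical
  set f : ℝ → ℝ := fun x => ‖u x‖ ^ 2 / x with hfdef
  set h : ℝ → ℝ := fun x => ‖modelN l k u x‖ ^ 2 / x with hhdef
  set g : ℝ → ℝ := fun x => ‖u x‖ ^ 2 with hgdef
  have hucont : ContinuousOn u (Ioi 0) := fun x hx =>
    ((hdiff x hx).continuousAt).continuousWithinAt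
  have hNc : ContinuousOn (modelN l k u) (Ioi 0) := modelN_contOn hucont hdcont
  have hIoiMeas : MeasurableSet (Ioi (0:ℝ)) := measurableSet_Ioi
  have hgcont : ContinuousOn g (Ioi 0) := (hucont.norm).pow 2
  have hxne : ∀ x ∈ Ioi (0:ℝ), x ≠ 0 := fun x hx => ne_of_gt hx
  have hfcont : ContinuousOn f (Ioi 0) := hgcont.div continuousOn_id hxne
  have hhcont : ContinuousOn h (Ioi 0) := ((hNc.norm).pow 2).div continuousOn_id hxne
  have hfin' : (∫⁻ x in Ioi (0:ℝ), ENNReal.ofReal (f x)) < ⊤ := hfin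
  have hf_ae_nonneg : 0 ≤ᵐ[volume.restrict (Ioi (0:ℝ))] f := by
    filter_upwards [ae_restrict_mem hIoiMeas] with x hx
    have hx0 : (0:ℝ) < x := hx
    have : f x = ‖u x‖ ^ 2 / x := rfl
    rw [this]; positivity
  have hfi : IntegrableOn f (Ioi 0) := by
    constructor
    · exact hfcont.aestronglyMeasurable hIoiMeas
    · rw [hasFiniteIntegral_iff_norm]
      have hcongr : ∀ᵐ x ∂(volume.restrict (Ioi (0:ℝ))),
          ENNReal.ofReal ‖f x‖ = ENNReal.ofReal (f x) := by
        filter_upwards [hf_ae_nonneg] with x hx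
        rw [Real.norm_eq_abs, abs_of_nonneg hx]
      rwa [lintegral_congr_ae hcongr]
  set Bl : ENNReal := ∫⁻ x in Ioi (0:ℝ), ENNReal.ofReal (‖modelN l k u x‖ ^ 2 / x) with hBl
  by_cases hBtop : Bl = ⊤
  · rw [hBtop, ENNReal.mul_top
      (ENNReal.ofReal_pos.mpr (by positivity : (0:ℝ) < 1 / δ ^ 2)).ne']
    exact le_top
  set B : ℝ := Bl.toReal with hBdef
  have hB0 : 0 ≤ B := ENNReal.toReal_nonneg
  -- bound on interval integrals of h
  have hhIoc : ∀ ε R : ℝ, 0 < ε → ε ≤ R → (∫ x in ε..R, h x) ≤ B := by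
    intro ε R hε hεR
    have hsub : Ioc ε R ⊆ Ioi (0:ℝ) := fun x hx => lt_trans hε hx.1
    have hsubIcc : Icc ε R ⊆ Ioi (0:ℝ) := fun x hx => lt_of_lt_of_le hε hx.1
    have hint : IntegrableOn h (Ioc ε R) :=
      ((hhcont.mono hsubIcc).integrableOn_Icc).mono_set Ioc_subset_Icc_self
    have hnn : 0 ≤ᵐ[volume.restrict (Ioc ε R)] h := by
      filter_upwards [ae_restrict_mem measurableSet_Ioc] with x hx
      have hx0 : (0:ℝ) < x := hsub hx
      have : h x = ‖modelN l k u x‖ ^ 2 / x := rfl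
      rw [this]; positivity
    have heq : ENNReal.ofReal (∫ x in Ioc ε R, h x)
        = ∫⁻ x in Ioc ε R, ENNReal.ofReal (h x) :=
      ofReal_integral_eq_lintegral_ofReal hint hnn
    have hle : (∫⁻ x in Ioc ε R, ENNReal.ofReal (h x)) ≤ Bl := by
      rw [hBl]; exact lintegral_mono_set hsub
    rw [intervalIntegral.integral_of_le hεR]
    have hle2 : ENNReal.ofReal (∫ x in Ioc ε R, h x) ≤ ENNReal.ofReal B := by
      rw [hBdef, ENNReal.ofReal_toReal hBtop, heq]; exact hle
    exact (ENNReal.ofReal_le_ofReal_iff hB0).mp hle2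
  -- key interval estimate
  have hkey : ∀ ε R : ℝ, 0 < ε → ε ≤ R → δ * (∫ x in ε..R, f x) ≤ g R + B / δ := by
    intro ε R hε hεR
    have huIcc : uIcc ε R ⊆ Ioi (0:ℝ) := by
      rw [uIcc_of_le hεR]
      exact fun x hx => lt_of_lt_of_le hε hx.1
    set G : ℝ → ℝ := fun x =>
      2 * ((u x).re * (deriv u x).re + (u x).im * (deriv u x).im) with hGdef
    have hGcont : ContinuousOn G (Ioi 0) := by
      apply ContinuousOn.mul continuousOn_const
      exact ((Complex.continuous_re.comp_continuousOn hucont).mul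
        (Complex.continuous_re.comp_continuousOn hdcont)).add
        ((Complex.continuous_im.comp_continuousOn hucont).mul
        (Complex.continuous_im.comp_continuousOn hdcont))
    have hgderiv : ∀ x ∈ uIcc ε R, HasDerivAt g (G x) x := fun x hx =>
      hasDerivAt_norm_sq_comp (hdiff x (huIcc hx))
    have hGint : IntervalIntegrable G volume ε R := (hGcont.mono huIcc).intervalIntegrable
    have hFTC : (∫ x in ε..R, G x) = g R - g ε :=
      intervalIntegral.integral_eq_sub_of_hasDerivAt hgderiv hGint
    have hfint : IntervalIntegrable f volume ε R := (hfcont.mono huIcc).intervalIntegrable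
    have hhint : IntervalIntegrable h volume ε R := (hhcont.mono huIcc).intervalIntegrable
    have hmono : (∫ x in ε..R, (δ * f x - G x)) ≤ ∫ x in ε..R, (1 / δ) * h x := by
      apply intervalIntegral.integral_mono_on hεR
        ((hfint.const_mul δ).sub hGint) (hhint.const_mul (1 / δ))
      intro x hx
      have hx0 : (0:ℝ) < x := lt_of_lt_of_le hε hx.1
      exact pointwise_ineq l k δ hδ hcoef hx0
    have hsplit : (∫ x in ε..R, (δ * f x - G x))
        = δ * (∫ x in ε..R, f x) - (g R - g ε) := by
      rw [intervalIntegral.integral_sub (hfint.const_mul δ) hGint,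
        intervalIntegral.integral_const_mul, hFTC]
    have hrhs : (∫ x in ε..R, (1 / δ) * h x) = (1 / δ) * ∫ x in ε..R, h x :=
      intervalIntegral.integral_const_mul _ _
    have hhB := hhIoc ε R hε hεR
    have hgε : 0 ≤ g ε := by
      have : g ε = ‖u ε‖ ^ 2 := rfl
      rw [this]; positivity
    have h1δ : (0:ℝ) ≤ 1 / δ := by positivity
    have hBd : (1 / δ) * B = B / δ := by ring
    rw [hsplit, hrhs] at hmono
    nlinarith [mul_le_mul_of_nonneg_left hhB h1δ]
  -- liminf of g at infinity is 0
  have hliminf : ∀ c : ℝ, 0 < c → ∀ X : ℝ, 0 < X → ∃ R, X ≤ R ∧ g R < c := by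
    intro c hc X hX
    by_contra hcon
    push_neg at hcon
    have hfiX : IntegrableOn f (Ioi X) := hfi.mono_set (Ioi_subset_Ioi hX.le)
    have hinvcont : ContinuousOn (fun x : ℝ => c * x⁻¹) (Ioi X) := by
      apply continuousOn_const.mul
      exact ContinuousOn.inv₀ continuousOn_id (fun x hx => ne_of_gt (lt_trans hX hx))
    have hinv : IntegrableOn (fun x : ℝ => c * x⁻¹) (Ioi X) := by
      apply Integrable.mono hfiX (hinvcont.aestronglyMeasurable measurableSet_Ioi)
      filter_upwards [ae_restrict_mem measurableSet_Ioi] with x hx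
      have hx0 : (0:ℝ) < x := lt_trans hX hx
      have h1 : c ≤ g x := hcon x hx.le
      have hgx : g x = ‖u x‖ ^ 2 := rfl
      have hfx : f x = ‖u x‖ ^ 2 / x := rfl
      rw [Real.norm_eq_abs, Real.norm_eq_abs, abs_of_nonneg (by positivity : (0:ℝ) ≤ c * x⁻¹),
        abs_of_nonneg (by rw [hfx]; positivity : (0:ℝ) ≤ f x), hfx, div_eq_mul_inv]
      rw [hgx] at h1
      exact mul_le_mul_of_nonneg_right h1 (inv_nonneg.mpr hx0.le)
    have hrpow : IntegrableOn (fun x : ℝ => x ^ (-1 : ℝ)) (Ioi X) := by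
      apply IntegrableOn.congr_fun (hinv.const_mul c⁻¹ : IntegrableOn _ _ _) ?_ measurableSet_Ioi
      intro x hx
      have hx0 : (0:ℝ) < x := lt_trans hX hx
      show c⁻¹ * (c * x⁻¹) = x ^ (-1 : ℝ)
      rw [Real.rpow_neg_one]
      field_simp
    rw [integrableOn_Ioi_rpow_iff hX] at hrpow
    linarith
  -- main real bound
  have hmain : (∫ x in Ioi (0:ℝ), f x) ≤ B / δ ^ 2 := by
    refine le_of_forall_pos_le_add ?_
    intro c hc
    have h1δpos : (0:ℝ) < 1 + 1 / δ := by positivity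
    set c₀ : ℝ := c / (1 + 1 / δ) with hc₀def
    have hc₀ : 0 < c₀ := by positivity
    have hU : (⋃ n : ℕ, Ioc (0:ℝ) (n + 1)) = Ioi 0 := by
      ext x
      simp only [mem_iUnion, mem_Ioc, mem_Ioi]
      constructor
      · rintro ⟨n, hn, _⟩; exact hn
      · intro hx
        obtain ⟨n, hn⟩ := exists_nat_gt x
        exact ⟨n, hx, by linarith⟩
    have hmonoS : Monotone (fun n : ℕ => Ioc (0:ℝ) (n + 1)) := fun m n hmn =>
      Ioc_subset_Ioc_right (by exact_mod_cast add_le_add_left (Nat.cast_le.mpr hmn) 1)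
    have htail : Filter.Tendsto (fun n : ℕ => ∫ x in Ioc (0:ℝ) (n + 1), f x) Filter.atTop
        (nhds (∫ x in Ioi (0:ℝ), f x)) := by
      have := tendsto_setIntegral_of_monotone (fun n : ℕ => measurableSet_Ioc) hmonoS
        (by rw [hU]; exact hfi)
      rwa [hU] at this
    obtain ⟨n₀, hn₀⟩ := (htail.eventually
      (eventually_gt_nhds (sub_lt_self _ hc₀))).exists
    obtain ⟨R, hR1, hR2⟩ := hliminf c₀ hc₀ ((n₀ : ℝ) + 1) (by positivity)
    have hRpos : (0:ℝ) < R := lt_of_lt_of_le (by positivity) hR1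
    have hfiR : IntegrableOn f (Ioc (0:ℝ) R) := hfi.mono_set Ioc_subset_Ioi_self
    have hnnR : 0 ≤ᵐ[volume.restrict (Ioc (0:ℝ) R)] f := by
      filter_upwards [ae_restrict_mem measurableSet_Ioc] with x hx
      have hx0 : (0:ℝ) < x := hx.1
      have : f x = ‖u x‖ ^ 2 / x := rfl
      rw [this]; positivity
    have hstep : (∫ x in Ioc (0:ℝ) ((n₀ : ℝ) + 1), f x) ≤ ∫ x in Ioc (0:ℝ) R, f x :=
      setIntegral_mono_set hfiR hnnR (HasSubset.Subset.eventuallyLE (Ioc_subset_Ioc_right hR1))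
    have hseq : ∀ n : ℕ, (∫ x in Ioc (R / (n + 1)) R, f x) ≤ (c₀ + B / δ) / δ := by
      intro n
      have hone : (1:ℝ) ≤ (n : ℝ) + 1 := le_add_of_nonneg_left (Nat.cast_nonneg n)
      have hε : (0:ℝ) < R / (n + 1) := by positivity
      have hεR : R / (n + 1) ≤ R := div_le_self hRpos.le hone
      have hk2 := hkey (R / (n + 1)) R hε hεR
      rw [intervalIntegral.integral_of_le hεR] at hk2
      rw [le_div_iff₀ hδ]
      nlinarith
    have hmono2 : Monotone (fun n : ℕ => Ioc (R / (n + 1)) R) := by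
      intro m n hmn
      apply Ioc_subset_Ioc_left
      exact div_le_div_of_nonneg_left hRpos.le (by positivity)
        (by exact_mod_cast add_le_add_left (Nat.cast_le.mpr hmn) 1)
    have hU2 : (⋃ n : ℕ, Ioc (R / (n + 1)) R) = Ioc (0:ℝ) R := by
      ext x
      simp only [mem_iUnion, mem_Ioc]
      constructor
      · rintro ⟨n, hn, hxR⟩
        exact ⟨lt_trans (by positivity) hn, hxR⟩
      · rintro ⟨hx0, hxR⟩
        obtain ⟨n, hn⟩ := exists_nat_gt (R / x)
        refine ⟨n, ?_, hxR⟩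
        rw [div_lt_iff₀ (by positivity : (0:ℝ) < (n : ℝ) + 1)]
        rw [div_lt_iff₀ hx0] at hn
        nlinarith
    have hlim2 : Filter.Tendsto (fun n : ℕ => ∫ x in Ioc (R / (n + 1)) R, f x) Filter.atTop
        (nhds (∫ x in Ioc (0:ℝ) R, f x)) := by
      have := tendsto_setIntegral_of_monotone (fun n : ℕ => measurableSet_Ioc) hmono2
        (by rw [hU2]; exact hfiR)
      rwa [hU2] at this
    have hIocR : (∫ x in Ioc (0:ℝ) R, f x) ≤ (c₀ + B / δ) / δ :=
      le_of_tendsto hlim2 (Filter.Eventually.of_forall hseq)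
    have hfinal : c₀ + (c₀ + B / δ) / δ = B / δ ^ 2 + c := by
      rw [hc₀def]
      field_simp
      ring
    linarith
  -- conclude in ℝ≥0∞
  have hLeq : (∫⁻ x in Ioi (0:ℝ), ENNReal.ofReal (‖u x‖ ^ 2 / x))
      = ENNReal.ofReal (∫ x in Ioi (0:ℝ), f x) :=
    (ofReal_integral_eq_lintegral_ofReal hfi hf_ae_nonneg).symm
  rw [hLeq]
  calc ENNReal.ofReal (∫ x in Ioi (0:ℝ), f x) ≤ ENNReal.ofReal (B / δ ^ 2) :=
        ENNReal.ofReal_le_ofReal hmain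
    _ = ENNReal.ofReal (1 / δ ^ 2) * ENNReal.ofReal B := by
        rw [← ENNReal.ofReal_mul (by positivity : (0:ℝ) ≤ 1 / δ ^ 2)]
        congr 1
        ring
    _ = ENNReal.ofReal (1 / δ ^ 2) * Bl := by
        rw [hBdef, ENNReal.ofReal_toReal hBtop]
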